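/- Let r, s ≥ 2 be integers. Assume that for every n and every hypergraph H on vertex set [n] one has χ(KG^r(H)) ≥ (n − alt_r(H)) / (r − 1) and χ(KG^s(H)) ≥ (n − alt_s(H)) / (s − 1). Then for every n and every hypergraph F on vertex set [n], χ(KG^{rs}(F)) ≥ (n − alt_{rs}(F)) / (rs − 1). -/

import Mathlib

open Finset

/-- A proper `t`-coloring of the Kneser hypergraph `KG^r(F)`: vertices are the members of `F`,
colors are taken in `{1,...,t}`, and no set of `r` pairwise disjoint members of `F`
(an edge) is monochromatic. -/
def IsKneserColoring (n r t : ℕ) (F : Finset (Finset (Fin n)))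
    (c : Finset (Fin n) → ℕ) : Prop :=
  (∀ A ∈ F, c A ∈ Finset.Icc 1 t) ∧
    ∀ E : Finset (Finset (Fin n)), E ⊆ F → E.card = r →
      ((E : Set (Finset (Fin n))).Pairwise fun A B => Disjoint A B) →
      ¬ ∃ i, ∀ A ∈ E, c A = i

/-- The chromatic number of the Kneser hypergraph `KG^r(F)`. -/
noncomputable def kneserChrom (n r : ℕ) (F : Finset (Finset (Fin n))) : ℕ :=
  sInf {t | ∃ c, IsKneserColoring n r t F c}

/-- `l` is (the index list of) an alternating subsequence of
`(X (σ 1), ..., X (σ n))`: indices are increasing, all chosen entries are nonzero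
(`≠ none`), and any two consecutive chosen entries differ. -/
def IsAltList {α : Type*} (n : ℕ) (σ : Equiv.Perm (Fin n))
    (X : Fin n → Option α) (l : List (Fin n)) : Prop :=
  l.Chain' (· < ·) ∧ (∀ i ∈ l, X (σ i) ≠ none) ∧
    l.Chain' (fun i j => X (σ i) ≠ X (σ j))

/-- `alt_σ(X)`: maximum length of an alternating subsequence of nonzero entries of
`(X (σ 1), ..., X (σ n))`. -/
noncomputable def altVec {α : Type*} (n : ℕ) (σ : Equiv.Perm (Fin n))
    (X : Fin n → Option α) : ℕ :=
  sSup {k | ∃ l : List (Fin n), IsAltList n σ X l ∧ l.length = k}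

/-- `alt_{r,σ}(F)`: the largest `ℓ` such that some nonzero `X ∈ (Z_r ∪ {0})^n` has
`alt_σ(X) = ℓ` and no `X^j` contains a member of `F`. -/
noncomputable def altHyp (n r : ℕ) (σ : Equiv.Perm (Fin n))
    (F : Finset (Finset (Fin n))) : ℕ :=
  sSup {k | ∃ X : Fin n → Option (Fin r), (∃ a, X a ≠ none) ∧
    altVec n σ X = k ∧ ∀ j : Fin r, ∀ A ∈ F, ¬ ∀ a ∈ A, X a = some j}

/-- `alt_r(F) = min_σ alt_{r,σ}(F)`. -/
noncomputable def altNum (n r : ℕ) (F : Finset (Finset (Fin n))) : ℕ :=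
  sInf {k | ∃ σ : Equiv.Perm (Fin n), altHyp n r σ F = k}

section Helpers

variable {n : ℕ} {α : Type*}

lemma chain'_lt_length_le {l : List (Fin n)} (h : l.Chain' (· < ·)) : l.length ≤ n := by
  classical
  have hp : l.Pairwise (· < ·) := List.isChain_iff_pairwise.mp h
  have hnd : l.Nodup := hp.imp (fun hab => ne_of_lt hab)
  calc l.length = l.toFinset.card := (List.toFinset_card_of_nodup hnd).symm
    _ ≤ (Finset.univ : Finset (Fin n)).card := Finset.card_le_card (Finset.subset_univ _)
    _ = n := by simp

lemma isAltList_nil (σ : Equiv.Perm (Fin n)) (X : Fin n → Option α) :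
    IsAltList n σ X [] := ⟨List.isChain_nil, by simp, List.isChain_nil⟩

lemma altVec_bdd (σ : Equiv.Perm (Fin n)) (X : Fin n → Option α) :
    BddAbove {k | ∃ l : List (Fin n), IsAltList n σ X l ∧ l.length = k} := by
  refine ⟨n, fun k hk => ?_⟩
  obtain ⟨l, hl, rfl⟩ := hk
  exact chain'_lt_length_le hl.1

lemma le_altVec {σ : Equiv.Perm (Fin n)} {X : Fin n → Option α} {l : List (Fin n)}
    (hl : IsAltList n σ X l) : l.length ≤ altVec n σ X :=
  le_csSup (altVec_bdd σ X) ⟨l, hl, rfl⟩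

lemma altVec_le (σ : Equiv.Perm (Fin n)) (X : Fin n → Option α) : altVec n σ X ≤ n := by
  refine csSup_le ⟨0, [], isAltList_nil σ X, rfl⟩ (fun k hk => ?_)
  obtain ⟨l, hl, rfl⟩ := hk
  exact chain'_lt_length_le hl.1

lemma altVec_attain (σ : Equiv.Perm (Fin n)) (X : Fin n → Option α) :
    ∃ l : List (Fin n), IsAltList n σ X l ∧ l.length = altVec n σ X := by
  have := Nat.sSup_mem (s := {k | ∃ l : List (Fin n), IsAltList n σ X l ∧ l.length = k})
    ⟨0, [], isAltList_nil σ X, rfl⟩ (altVec_bdd σ X)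
  exact this

lemma altHyp_bdd (nn r : ℕ) (σ : Equiv.Perm (Fin nn)) (F : Finset (Finset (Fin nn))) :
    BddAbove {k | ∃ X : Fin nn → Option (Fin r), (∃ a, X a ≠ none) ∧
      altVec nn σ X = k ∧ ∀ j : Fin r, ∀ A ∈ F, ¬ ∀ a ∈ A, X a = some j} := by
  refine ⟨nn, fun k hk => ?_⟩
  obtain ⟨X, -, rfl, -⟩ := hk
  exact altVec_le σ X

lemma altVec_le_altHyp {nn r : ℕ} {σ : Equiv.Perm (Fin nn)} {F : Finset (Finset (Fin nn))}
    {X : Fin nn → Option (Fin r)} (h1 : ∃ a, X a ≠ none)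
    (h2 : ∀ j : Fin r, ∀ A ∈ F, ¬ ∀ a ∈ A, X a = some j) :
    altVec nn σ X ≤ altHyp nn r σ F :=
  le_csSup (altHyp_bdd nn r σ F) ⟨X, h1, rfl, h2⟩

lemma altHyp_attain {nn r : ℕ} {σ : Equiv.Perm (Fin nn)} {F : Finset (Finset (Fin nn))}
    (h : altHyp nn r σ F ≠ 0) :
    ∃ X : Fin nn → Option (Fin r), (∃ a, X a ≠ none) ∧
      altVec nn σ X = altHyp nn r σ F ∧ ∀ j : Fin r, ∀ A ∈ F, ¬ ∀ a ∈ A, X a = some j := by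
  have hne : {k | ∃ X : Fin nn → Option (Fin r), (∃ a, X a ≠ none) ∧
      altVec nn σ X = k ∧ ∀ j : Fin r, ∀ A ∈ F, ¬ ∀ a ∈ A, X a = some j}.Nonempty := by
    by_contra hc
    rw [Set.not_nonempty_iff_eq_empty] at hc
    apply h
    unfold altHyp
    rw [hc]
    exact csSup_empty
  exact Nat.sSup_mem hne (altHyp_bdd nn r σ F)

lemma altNum_le_altHyp (nn r : ℕ) (σ : Equiv.Perm (Fin nn)) (F : Finset (Finset (Fin nn))) :
    altNum nn r F ≤ altHyp nn r σ F :=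
  Nat.sInf_le ⟨σ, rfl⟩

lemma altNum_attain (nn r : ℕ) (F : Finset (Finset (Fin nn))) :
    ∃ σ : Equiv.Perm (Fin nn), altHyp nn r σ F = altNum nn r F :=
  Nat.sInf_mem (s := {k | ∃ σ : Equiv.Perm (Fin nn), altHyp nn r σ F = k}) ⟨altHyp nn r 1 F, 1, rfl⟩

lemma kneserChrom_le {nn r t : ℕ} {F : Finset (Finset (Fin nn))}
    (h : ∃ c, IsKneserColoring nn r t F c) : kneserChrom nn r F ≤ t :=
  Nat.sInf_le h

lemma kneserChrom_attain (nn r : ℕ) (hr : 2 ≤ r) (F : Finset (Finset (Fin nn))) :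
    ∃ c, IsKneserColoring nn r (kneserChrom nn r F) F c := by
  classical
  have hne : {t | ∃ c, IsKneserColoring nn r t F c}.Nonempty := by
    refine ⟨F.card, fun A => if h : A ∈ F then (F.equivFin ⟨A, h⟩).val + 1 else 1, ?_, ?_⟩
    · intro A hA
      simp only [dif_pos hA, Finset.mem_Icc]
      exact ⟨Nat.le_add_left 1 _, (F.equivFin ⟨A, hA⟩).isLt⟩
    · rintro E hE hcard hpw ⟨i, hi⟩
      have h1 : 1 < E.card := by omega
      obtain ⟨A, hA, B, hB, hAB⟩ := Finset.one_lt_card.mp h1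
      have hAF := hE hA
      have hBF := hE hB
      have e1 := hi A hA
      have e2 := hi B hB
      simp only [dif_pos hAF] at e1
      simp only [dif_pos hBF] at e2
      apply hAB
      have : F.equivFin ⟨A, hAF⟩ = F.equivFin ⟨B, hBF⟩ := by
        apply Fin.ext; omega
      have := F.equivFin.injective this
      exact Subtype.ext_iff.mp this
  exact Nat.sInf_mem hne

end Helpers

section Helpers2
variable {n : ℕ}

lemma card_filter_ge (n m : ℕ) :
    (Finset.univ.filter (fun i : Fin n => m ≤ i.val)).card = n - m := by
  classical
  have himg : ((Finset.univ.filter (fun i : Fin n => m ≤ i.val)).image Fin.val)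
      = Finset.Ico m n := by
    ext x
    simp only [Finset.mem_image, Finset.mem_filter, Finset.mem_univ, true_and, Finset.mem_Ico]
    constructor
    · rintro ⟨i, hi, rfl⟩; exact ⟨hi, i.isLt⟩
    · rintro ⟨h1, h2⟩; exact ⟨⟨x, h2⟩, h1, rfl⟩
  calc (Finset.univ.filter (fun i : Fin n => m ≤ i.val)).card
      = ((Finset.univ.filter (fun i : Fin n => m ≤ i.val)).image Fin.val).card :=
        (Finset.card_image_of_injective _ Fin.val_injective).symm
    _ = (Finset.Ico m n).card := by rw [himg]
    _ = n - m := Nat.card_Ico m n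

lemma filter_lt_prefix (m : ℕ) (l : List (Fin n)) (h : l.Chain' (· < ·)) :
    l.filter (fun i => decide (i.val < m)) <+: l := by
  induction l with
  | nil => simp
  | cons a t ih =>
    have ht : t.Chain' (· < ·) := h.tail
    by_cases ha : a.val < m
    · rw [List.filter_cons, if_pos (by simpa using ha)]
      obtain ⟨w, hw⟩ := ih ht
      exact ⟨w, by simp [hw]⟩
    · have hall : ∀ b ∈ t, ¬ (decide (b.val < m) = true) := by
        intro b hb
        have hab : a < b := (List.pairwise_cons.mp (List.isChain_iff_pairwise.mp h)).1 b hb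
        have : a.val < b.val := hab
        simp only [decide_eq_true_eq]
        omega
      rw [List.filter_cons, if_neg (by simpa using ha), List.filter_eq_nil_iff.mpr hall]
      exact List.nil_prefix

lemma length_le_filter (m : ℕ) (hm : m ≤ n) (l : List (Fin n)) (h : l.Chain' (· < ·)) :
    l.length ≤ (l.filter (fun i => decide (i.val < m))).length + (n - m) := by
  classical
  have hnd : l.Nodup := (List.isChain_iff_pairwise.mp h).imp (fun hab => ne_of_lt hab)
  have h2 : (l.filter (fun i => !decide (i.val < m))).length ≤ n - m := by
    set l2 := l.filter (fun i => !decide (i.val < m)) with hl2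
    have hnd2 : l2.Nodup := (List.filter_sublist).nodup hnd
    have hsub : l2.toFinset ⊆ Finset.univ.filter (fun i : Fin n => m ≤ i.val) := by
      intro x hx
      rw [List.mem_toFinset, hl2, List.mem_filter] at hx
      simp only [Finset.mem_filter, Finset.mem_univ, true_and]
      have := hx.2
      simp only [Bool.not_eq_true', decide_eq_false_iff_not] at this
      omega
    calc l2.length = l2.toFinset.card := (List.toFinset_card_of_nodup hnd2).symm
      _ ≤ _ := Finset.card_le_card hsub
      _ = n - m := card_filter_ge n m
  have h3 := List.length_eq_length_filter_add (l := l) (fun i => decide (i.val < m))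
  omega

end Helpers2

section Helpers3
variable {n : ℕ}

def segList (D : Finset (Fin n)) : List (Fin n) := D.sort (· ≤ ·) ++ Dᶜ.sort (· ≤ ·)

lemma segList_nodup (D : Finset (Fin n)) : (segList D).Nodup := by
  refine List.Nodup.append (Finset.sort_nodup _ _) (Finset.sort_nodup _ _) ?_
  intro a ha hb
  rw [Finset.mem_sort] at ha hb
  exact (Finset.mem_compl.mp hb) ha

lemma segList_mem (D : Finset (Fin n)) (a : Fin n) : a ∈ segList D := by
  rw [segList, List.mem_append, Finset.mem_sort, Finset.mem_sort, Finset.mem_compl]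
  tauto

lemma segList_length (D : Finset (Fin n)) : (segList D).length = n := by
  have h1 : D.card ≤ n := by
    simpa using Finset.card_le_card (Finset.subset_univ D)
  simp only [segList, List.length_append, Finset.length_sort, Finset.card_compl,
    Fintype.card_fin]
  omega

noncomputable def segEquiv (D : Finset (Fin n)) : Fin n ≃ Fin n :=
  (finCongr (segList_length D).symm).trans
    (List.Nodup.getEquivOfForallMemList (segList D) (segList_nodup D) (segList_mem D))

lemma segEquiv_apply (D : Finset (Fin n)) (i : Fin n) (h : i.val < (D.sort (· ≤ ·)).length) :
    segEquiv D i = (D.sort (· ≤ ·)).get ⟨i.val, h⟩ := by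
  show (segList D).get ⟨i.val, _⟩ = _
  simp only [List.get_eq_getElem, segList]
  exact List.getElem_append_left h

lemma segEquiv_mem (D : Finset (Fin n)) (i : Fin n) (h : i.val < D.card) :
    segEquiv D i ∈ D := by
  have h' : i.val < (D.sort (· ≤ ·)).length := by rwa [Finset.length_sort]
  rw [segEquiv_apply D i h']
  have := List.get_mem (D.sort (· ≤ ·)) ⟨i.val, h'⟩
  rwa [Finset.mem_sort] at this

lemma segEquiv_strictMono (D : Finset (Fin n)) {i i' : Fin n}
    (h : i.val < D.card) (h' : i'.val < D.card) (hii : i < i') :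
    segEquiv D i < segEquiv D i' := by
  have hL : i.val < (D.sort (· ≤ ·)).length := by rwa [Finset.length_sort]
  have hL' : i'.val < (D.sort (· ≤ ·)).length := by rwa [Finset.length_sort]
  rw [segEquiv_apply D i hL, segEquiv_apply D i' hL']
  exact (D.sortedLT_sort).strictMono_get (show (⟨i.val, hL⟩ : Fin _) < ⟨i'.val, hL'⟩ from hii)

lemma sort_adjacent_chain (S : Finset (Fin n)) (R : Fin n → Fin n → Prop)
    (h : ∀ a b : Fin n, a ∈ S → b ∈ S → a < b → (∀ x ∈ S, ¬(a < x ∧ x < b)) → R a b) :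
    (S.sort (· ≤ ·)).Chain' R := by
  refine List.isChain_iff_getElem.mpr ?_
  intro i hi
  set l := S.sort (· ≤ ·) with hl
  have hsort : l.SortedLT := S.sortedLT_sort
  have hmem : ∀ k (hk : k < l.length), l.get ⟨k, hk⟩ ∈ S := by
    intro k hk
    have := List.get_mem l ⟨k, hk⟩
    exact (Finset.mem_sort _).mp this
  refine h _ _ (hmem i (by omega)) (hmem (i+1) (by omega)) ?_ ?_
  · exact hsort.strictMono_get (show (⟨i, by omega⟩ : Fin l.length) < ⟨i+1, by omega⟩ by
      simp [Fin.lt_def])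
  · rintro x hx ⟨h1, h2⟩
    have hxl : x ∈ l := (Finset.mem_sort _).mpr hx
    obtain ⟨k, hk⟩ := List.mem_iff_get.mp hxl
    rw [← hk] at h1 h2
    have k1 : (⟨i, by omega⟩ : Fin l.length) < k := hsort.strictMono_get.lt_iff_lt.mp h1
    have k2 : k < (⟨i+1, by omega⟩ : Fin l.length) := hsort.strictMono_get.lt_iff_lt.mp h2
    rw [Fin.lt_def] at k1 k2
    simp at k1 k2
    omega

lemma adjacent_in_chain {q : List (Fin n)} (hq : q.Chain' (· < ·))
    {R : Fin n → Fin n → Prop} (hR : q.Chain' R) {a b : Fin n}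
    (ha : a ∈ q) (hb : b ∈ q) (hab : a < b)
    (hbetween : ∀ x ∈ q, ¬(a < x ∧ x < b)) : R a b := by
  have hsort : q.SortedLT := List.IsChain.sortedLT hq
  obtain ⟨u, hu⟩ := List.mem_iff_get.mp ha
  obtain ⟨w, hw⟩ := List.mem_iff_get.mp hb
  have huw : u < w := by
    apply hsort.strictMono_get.lt_iff_lt.mp
    rw [hu, hw]; exact hab
  have hw1 : w.val = u.val + 1 := by
    by_contra hc
    have hu1 : u.val + 1 < w.val := by
      have := Fin.lt_def.mp huw; omega
    have hlt : u.val + 1 < q.length := by omega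
    refine hbetween (q.get ⟨u.val + 1, hlt⟩) (List.get_mem _ _) ⟨?_, ?_⟩
    · rw [← hu]
      apply hsort.strictMono_get
      simp [Fin.lt_def]
    · rw [← hw]
      apply hsort.strictMono_get
      simpa [Fin.lt_def] using hu1
  have hlen : u.val < q.length - 1 := by
    have := w.isLt; omega
  have h5 := List.isChain_iff_getElem.mp hR u.val (by omega)
  have hwu : w = (⟨u.val + 1, by omega⟩ : Fin q.length) := Fin.ext (by simpa using hw1)
  rw [← hu, ← hw, hwu]
  exact h5

end Helpers3
theorem stmt3 (r s : ℕ) (hr : 2 ≤ r) (hs : 2 ≤ s)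
    (hR : ∀ (n : ℕ) (H : Finset (Finset (Fin n))), (∀ A ∈ H, A.Nonempty) →
      ((n : ℚ) - (altNum n r H : ℚ)) / ((r : ℚ) - 1) ≤ (kneserChrom n r H : ℚ))
    (hS : ∀ (n : ℕ) (H : Finset (Finset (Fin n))), (∀ A ∈ H, A.Nonempty) →
      ((n : ℚ) - (altNum n s H : ℚ)) / ((s : ℚ) - 1) ≤ (kneserChrom n s H : ℚ)) :
    ∀ (n : ℕ) (F : Finset (Finset (Fin n))), (∀ A ∈ F, A.Nonempty) →
      ((n : ℚ) - (altNum n (r * s) F : ℚ)) / ((r : ℚ) * (s : ℚ) - 1)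
        ≤ (kneserChrom n (r * s) F : ℚ) := by
  intro n F hF
  classical
  have hrQ : (2:ℚ) ≤ (r:ℚ) := by exact_mod_cast hr
  have hsQ : (2:ℚ) ≤ (s:ℚ) := by exact_mod_cast hs
  have hdiv : (0:ℚ) < (r:ℚ) * (s:ℚ) - 1 := by nlinarith
  set t := kneserChrom n (r * s) F with ht
  obtain ⟨c, hc1, hc2⟩ := kneserChrom_attain n (r*s) (by nlinarith) F
  rw [div_le_iff₀ hdiv]
  have htnn : (0:ℚ) ≤ (t:ℚ) := by positivity
  suffices hkey : (n:ℚ) - (altNum n (r*s) F : ℚ) ≤ ((r:ℚ) * (s:ℚ) - 1) * (t:ℚ) by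
    calc (n:ℚ) - (altNum n (r*s) F : ℚ) ≤ ((r:ℚ) * (s:ℚ) - 1) * (t:ℚ) := hkey
      _ = (t:ℚ) * ((r:ℚ) * (s:ℚ) - 1) := mul_comm _ _
  -- the auxiliary hypergraph H
  set H : Finset (Finset (Fin n)) := Finset.univ.filter
    (fun A => ∃ i : ℕ, ∃ E : Finset (Finset (Fin n)),
      E ⊆ F ∧ E.card = s ∧ ((E : Set (Finset (Fin n))).Pairwise fun A B => Disjoint A B) ∧
      (∀ B ∈ E, B ⊆ A) ∧ ∀ B ∈ E, c B = i) with hH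
  have hHmem : ∀ A : Finset (Fin n), A ∈ H ↔ ∃ i : ℕ, ∃ E : Finset (Finset (Fin n)),
      E ⊆ F ∧ E.card = s ∧ ((E : Set (Finset (Fin n))).Pairwise fun A B => Disjoint A B) ∧
      (∀ B ∈ E, B ⊆ A) ∧ ∀ B ∈ E, c B = i := by
    intro A
    rw [hH, Finset.mem_filter]
    simp only [Finset.mem_univ, true_and]
  have hHne : ∀ A ∈ H, A.Nonempty := by
    intro A hA
    obtain ⟨i, E, hEF, hEcard, -, hEsub, -⟩ := (hHmem A).mp hA
    have : E.Nonempty := Finset.card_pos.mp (by omega)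
    obtain ⟨B, hB⟩ := this
    obtain ⟨b, hb⟩ := hF B (hEF hB)
    exact ⟨b, hEsub B hB hb⟩
  -- a proper coloring of KG^r(H) with t colors
  have hwit : ∀ A ∈ H, ∃ p : ℕ × Finset (Finset (Fin n)), p.2 ⊆ F ∧ p.2.card = s ∧
      ((p.2 : Set (Finset (Fin n))).Pairwise fun A B => Disjoint A B) ∧
      (∀ B ∈ p.2, B ⊆ A) ∧ ∀ B ∈ p.2, c B = p.1 := by
    intro A hA
    obtain ⟨i, E, h1, h2, h3, h4, h5⟩ := (hHmem A).mp hA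
    exact ⟨(i, E), h1, h2, h3, h4, h5⟩
  set W : Finset (Fin n) → ℕ × Finset (Finset (Fin n)) := fun A =>
    if hA : A ∈ H then Classical.choose (hwit A hA) else (1, ∅) with hWdef
  have hW : ∀ A ∈ H, (W A).2 ⊆ F ∧ (W A).2.card = s ∧
      (((W A).2 : Set (Finset (Fin n))).Pairwise fun A B => Disjoint A B) ∧
      (∀ B ∈ (W A).2, B ⊆ A) ∧ ∀ B ∈ (W A).2, c B = (W A).1 := by
    intro A hA
    simp only [hWdef, dif_pos hA]
    exact Classical.choose_spec (hwit A hA)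
  have hcolH : kneserChrom n r H ≤ t := by
    apply kneserChrom_le
    refine ⟨fun A => (W A).1, ?_, ?_⟩
    · intro A hA
      obtain ⟨hWF, hWcard, -, -, hWc⟩ := hW A hA
      obtain ⟨B, hB⟩ := Finset.card_pos.mp (show 0 < (W A).2.card by omega)
      show (W A).1 ∈ Finset.Icc 1 t
      rw [← hWc B hB]
      exact hc1 B (hWF hB)
    · rintro E hE hcard hpw ⟨i, hi⟩
      set Estar := E.biUnion (fun A => (W A).2) with hEstar
      have hdisj : ∀ A ∈ E, ∀ A' ∈ E, A ≠ A' → Disjoint (W A).2 (W A').2 := by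
        intro A hA A' hA' hne
        rw [Finset.disjoint_left]
        intro B hB hB'
        have hBA := (hW A (hE hA)).2.2.2.1 B hB
        have hBA' := (hW A' (hE hA')).2.2.2.1 B hB'
        have hdAA : Disjoint A A' := hpw hA hA' hne
        obtain ⟨b, hb⟩ := hF B ((hW A (hE hA)).1 hB)
        exact Finset.disjoint_left.mp hdAA (hBA hb) (hBA' hb)
      refine hc2 Estar ?_ ?_ ?_ ⟨i, ?_⟩
      · intro B hB
        obtain ⟨A, hA, hBA⟩ := Finset.mem_biUnion.mp hB
        exact (hW A (hE hA)).1 hBA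
      · rw [hEstar, Finset.card_biUnion hdisj]
        have : ∀ A ∈ E, (W A).2.card = s := fun A hA => (hW A (hE hA)).2.1
        rw [Finset.sum_congr rfl this, Finset.sum_const, hcard, smul_eq_mul]
      · intro B hB B' hB' hne
        simp only [hEstar, Finset.coe_biUnion, Set.mem_iUnion, Finset.mem_coe] at hB hB'
        obtain ⟨A, hA, hBA⟩ := hB
        obtain ⟨A', hA', hBA'⟩ := hB'
        rcases eq_or_ne A A' with rfl | hAA
        · exact (hW A (hE hA)).2.2.1 hBA hBA' hne
        · have hdAA : Disjoint A A' := hpw hA hA' hAA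
          exact Disjoint.mono
            ((hW A (hE hA)).2.2.2.1 B hBA) ((hW A' (hE hA')).2.2.2.1 B' hBA') hdAA
      · intro B hB
        obtain ⟨A, hA, hBA⟩ := Finset.mem_biUnion.mp hB
        rw [(hW A (hE hA)).2.2.2.2 B hBA]
        exact hi A hA
  have step1 : (n:ℚ) - (altNum n r H : ℚ) ≤ ((r:ℚ) - 1) * (t:ℚ) := by
    have h1 := hR n H hHne
    have hr1 : (0:ℚ) < (r:ℚ) - 1 := by linarith
    rw [div_le_iff₀ hr1] at h1
    have h2 : (kneserChrom n r H : ℚ) ≤ (t:ℚ) := by exact_mod_cast hcolH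
    calc (n:ℚ) - (altNum n r H : ℚ) ≤ (kneserChrom n r H : ℚ) * ((r:ℚ) - 1) := h1
      _ ≤ (t:ℚ) * ((r:ℚ) - 1) := by nlinarith
      _ = ((r:ℚ) - 1) * (t:ℚ) := mul_comm _ _
  obtain ⟨σ, hσ⟩ := altNum_attain n (r*s) F
  have key : (altNum n r H : ℚ) ≤ (altHyp n (r*s) σ F : ℚ) + (r:ℚ) * ((s:ℚ) - 1) * (t:ℚ) := by
    have hAH : (0:ℚ) ≤ (altHyp n (r*s) σ F : ℚ) := by positivity
    have hL := altNum_le_altHyp n r σ H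
    by_cases hL0 : altHyp n r σ H = 0
    · have h0 : altNum n r H = 0 := by omega
      rw [h0]
      have hnn : (0:ℚ) ≤ (r:ℚ)*((s:ℚ)-1)*(t:ℚ) :=
        mul_nonneg (mul_nonneg (by linarith) (by linarith)) htnn
      push_cast
      linarith
    obtain ⟨X, hXne, hXalt, hXavoid⟩ := altHyp_attain hL0
    obtain ⟨lX, hlX, hlXlen⟩ := altVec_attain σ X
    set D : Fin r → Finset (Fin n) := fun j => Finset.univ.filter (fun i => X (σ i) = some j)
      with hD
    have hDmem : ∀ (j : Fin r) (a : Fin n), a ∈ D j ↔ X (σ a) = some j := by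
      intro j a; simp [hD]
    set V : Fin r → Finset (Fin n) := fun j => (D j).image σ with hV
    have hVmem : ∀ (j : Fin r) (a : Fin n), a ∈ V j ↔ X a = some j := by
      intro j a
      simp only [hV, Finset.mem_image]
      constructor
      · rintro ⟨p, hp, rfl⟩; exact (hDmem j p).mp hp
      · intro ha
        exact ⟨σ.symm a, (hDmem j _).mpr (by simpa using ha), by simp⟩
    set Fj : Fin r → Finset (Finset (Fin n)) := fun j => F.filter (fun B => B ⊆ V j) with hFjd
    have hFjmem : ∀ (j : Fin r) (B : Finset (Fin n)), B ∈ Fj j ↔ B ∈ F ∧ B ⊆ V j := by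
      intro j B; simp [hFjd, Finset.mem_filter]
    have hVnotH : ∀ j : Fin r, V j ∉ H := by
      intro j hVH
      exact hXavoid j (V j) hVH (fun a ha => (hVmem j a).mp ha)
    have hFjcol : ∀ j : Fin r, kneserChrom n s (Fj j) ≤ t := by
      intro j
      apply kneserChrom_le
      refine ⟨c, fun B hB => hc1 B ((hFjmem j B).mp hB).1, ?_⟩
      rintro E hE hcard hpw ⟨i, hi⟩
      apply hVnotH j
      rw [hHmem]
      exact ⟨i, E, fun B hB => ((hFjmem j B).mp (hE hB)).1, hcard, hpw,
        fun B hB => ((hFjmem j B).mp (hE hB)).2, hi⟩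
    have hFjQ : ∀ j : Fin r, (n:ℚ) ≤ ((s:ℚ)-1) * (t:ℚ) + (altNum n s (Fj j) : ℚ) := by
      intro j
      have h1 := hS n (Fj j) (fun B hB => hF B ((hFjmem j B).mp hB).1)
      have hs1 : (0:ℚ) < (s:ℚ) - 1 := by linarith
      rw [div_le_iff₀ hs1] at h1
      have h2 : (kneserChrom n s (Fj j) : ℚ) ≤ (t:ℚ) := by exact_mod_cast hFjcol j
      nlinarith
    have hperj : ∀ j : Fin r, ∃ (Y : Fin n → Option (Fin s)) (l2 : List (Fin n)),
        (∀ k : Fin s, ∀ B ∈ Fj j, ¬ ∀ b ∈ B, Y b = some k) ∧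
        l2.Chain' (· < ·) ∧ (∀ i ∈ l2, i.val < (D j).card) ∧
        (∀ i ∈ l2, Y (σ (segEquiv (D j) i)) ≠ none) ∧
        l2.Chain' (fun i i' => Y (σ (segEquiv (D j) i)) ≠ Y (σ (segEquiv (D j) i'))) ∧
        (((D j).card : ℚ) ≤ ((s:ℚ)-1) * (t:ℚ) + (l2.length : ℚ)) := by
      intro j
      have hmn : (D j).card ≤ n := by
        simpa using Finset.card_le_card (Finset.subset_univ (D j))
      have hmnQ : ((D j).card : ℚ) ≤ (n:ℚ) := by exact_mod_cast hmn
      set π : Equiv.Perm (Fin n) := (segEquiv (D j)).trans σ with hπd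
      have haj := altNum_le_altHyp n s π (Fj j)
      by_cases haj0 : altHyp n s π (Fj j) = 0
      · refine ⟨fun _ => none, [], ?_, List.isChain_nil, by simp, by simp, List.isChain_nil, ?_⟩
        · intro k B hB hall
          obtain ⟨b, hb⟩ := hF B ((hFjmem j B).mp hB).1
          exact absurd (hall b hb) (by simp)
        · have h00 : altNum n s (Fj j) = 0 := by omega
          have hq0 := hFjQ j
          rw [h00] at hq0
          simp only [List.length_nil, Nat.cast_zero, add_zero] at hq0 ⊢
          linarith
      · obtain ⟨Y, hYne, hYalt, hYavoid⟩ := altHyp_attain haj0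
        obtain ⟨l, hl, hllen⟩ := altVec_attain π Y
        have hπa : ∀ i, π i = σ (segEquiv (D j) i) := fun i => rfl
        refine ⟨Y, l.filter (fun i => decide (i.val < (D j).card)), hYavoid, ?_, ?_, ?_, ?_, ?_⟩
        · exact (List.Pairwise.sublist (List.filter_sublist)
            (List.isChain_iff_pairwise.mp hl.1)).isChain
        · intro i hi
          exact of_decide_eq_true (List.mem_filter.mp hi).2
        · intro i hi
          rw [← hπa i]
          exact hl.2.1 i (List.mem_of_mem_filter hi)
        · exact (hl.2.2).prefix (filter_lt_prefix (D j).card l hl.1)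
        · have hlen1 := length_le_filter (D j).card hmn l hl.1
          have hlen1Q : (l.length : ℚ) ≤
              ((l.filter (fun i => decide (i.val < (D j).card))).length : ℚ)
              + ((n - (D j).card : ℕ) : ℚ) := by exact_mod_cast hlen1
          have hsubQ : ((n - (D j).card : ℕ) : ℚ) = (n:ℚ) - ((D j).card : ℚ) := by
            push_cast [Nat.cast_sub hmn]; ring
          have haltQ : (altNum n s (Fj j) : ℚ) ≤ (l.length : ℚ) := by
            have : altNum n s (Fj j) ≤ l.length := by rw [hllen, hYalt]; exact haj
            exact_mod_cast this
          have := hFjQ j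
          rw [hsubQ] at hlen1Q
          linarith
    choose Y l2 hYavoid hch hlt hnz hchd hlen using hperj
    set q : Fin r → List (Fin n) := fun j => (l2 j).map (segEquiv (D j)) with hqd
    set Z : Fin n → Option (Fin (r*s)) := fun a =>
      (X a).bind (fun j => (Y j a).map (fun k => finProdFinEquiv (j, k))) with hZd
    have hqmem : ∀ (j : Fin r) (a : Fin n), a ∈ q j → X (σ a) = some j ∧ Y j (σ a) ≠ none := by
      intro j a ha
      obtain ⟨i, hi, rfl⟩ := List.mem_map.mp (show a ∈ (l2 j).map (segEquiv (D j)) from ha)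
      exact ⟨(hDmem j _).mp (segEquiv_mem (D j) i (hlt j i hi)), hnz j i hi⟩
    have hZval : ∀ (j : Fin r) (a : Fin n), a ∈ q j →
        ∃ k, Y j (σ a) = some k ∧ Z (σ a) = some (finProdFinEquiv (j, k)) := by
      intro j a ha
      obtain ⟨hXa, hYa⟩ := hqmem j a ha
      obtain ⟨k, hk⟩ := Option.ne_none_iff_exists'.mp hYa
      refine ⟨k, hk, ?_⟩
      show (X (σ a)).bind (fun j => (Y j (σ a)).map (fun k => finProdFinEquiv (j, k))) = _
      rw [hXa]
      simp [hk]
    have hqchain : ∀ j : Fin r, (q j).Chain' (· < ·) := by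
      intro j
      apply (List.isChain_map _).mpr
      have hp := List.isChain_iff_pairwise.mp (hch j)
      exact (hp.imp_of_mem (fun {a b} ha hb hab =>
        segEquiv_strictMono (D j) (hlt j a ha) (hlt j b hb) hab)).isChain
    have hqZchain : ∀ j : Fin r, (q j).Chain' (fun a b => Y j (σ a) ≠ Y j (σ b)) :=
      fun j => (List.isChain_map _).mpr (hchd j)
    set S : Finset (Fin n) := Finset.univ.biUnion (fun j => (q j).toFinset) with hSd
    have hSmem : ∀ a : Fin n, a ∈ S ↔ ∃ j, a ∈ q j := by
      intro a; simp [hSd, Finset.mem_biUnion, List.mem_toFinset]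
    have hqnodup : ∀ j : Fin r, (q j).Nodup := by
      intro j
      apply List.Nodup.map (segEquiv (D j)).injective
      exact ((List.isChain_iff_pairwise.mp (hch j)).imp (fun h => ne_of_lt h))
    have hScard : S.card = ∑ j : Fin r, (l2 j).length := by
      rw [hSd, Finset.card_biUnion]
      · apply Finset.sum_congr rfl
        intro j _
        rw [List.toFinset_card_of_nodup (hqnodup j)]
        exact List.length_map _
      · intro j _ j' _ hjj
        rw [Function.onFun, Finset.disjoint_left]
        intro a ha ha'
        have h1 := (hqmem j a (List.mem_toFinset.mp ha)).1
        have h2 := (hqmem j' a (List.mem_toFinset.mp ha')).1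
        rw [h1] at h2
        exact hjj (Option.some.inj h2)
    set lZ := S.sort (· ≤ ·) with hlZd
    have hlZlen : lZ.length = S.card := Finset.length_sort _
    have hlZmem : ∀ a, a ∈ lZ ↔ a ∈ S := fun a => Finset.mem_sort _
    have hZalt : IsAltList n σ Z lZ := by
      refine ⟨?_, ?_, ?_⟩
      · exact (S.sortedLT_sort).isChain
      · intro i hi
        obtain ⟨j, hj⟩ := (hSmem i).mp ((hlZmem i).mp hi)
        obtain ⟨k, -, hk⟩ := hZval j i hj
        rw [hk]
        simp
      · apply sort_adjacent_chain
        intro a b ha hb hab hbetween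
        obtain ⟨j, hja⟩ := (hSmem a).mp ha
        obtain ⟨j', hjb⟩ := (hSmem b).mp hb
        obtain ⟨k, hYk, hZa⟩ := hZval j a hja
        obtain ⟨k', hYk', hZb⟩ := hZval j' b hjb
        rw [hZa, hZb]
        intro heq
        have hpair2 : (j, k) = (j', k') := finProdFinEquiv.injective (Option.some.inj heq)
        have hjj : j = j' := (Prod.ext_iff.mp hpair2).1
        have hkk : k = k' := (Prod.ext_iff.mp hpair2).2
        subst hjj
        have hdiff : Y j (σ a) ≠ Y j (σ b) := by
          apply adjacent_in_chain (hqchain j) (hqZchain j) hja hjb hab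
          intro x hx
          exact hbetween x ((hSmem x).mpr ⟨j, hx⟩)
        apply hdiff
        rw [hYk, hYk', hkk]
    have hZavoid : ∀ u : Fin (r*s), ∀ A ∈ F, ¬ ∀ a ∈ A, Z a = some u := by
      intro u A hA hall
      have hdec : ∀ a ∈ A, X a = some (finProdFinEquiv.symm u).1 ∧
          Y (finProdFinEquiv.symm u).1 a = some (finProdFinEquiv.symm u).2 := by
        intro a ha
        have hza : (X a).bind (fun j => (Y j a).map (fun k => finProdFinEquiv (j, k)))
            = some u := hall a ha
        rcases hx : X a with _ | j
        · rw [hx] at hza; exact absurd hza (by simp)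
        · rw [hx] at hza
          simp only [Option.bind_some] at hza
          rcases hy : Y j a with _ | k
          · rw [hy] at hza; exact absurd hza (by simp)
          · rw [hy] at hza
            simp only [Option.map_some, Option.some.injEq] at hza
            have hu : finProdFinEquiv.symm u = (j, k) := by
              rw [← hza]; exact finProdFinEquiv.symm_apply_apply _
            rw [hu]
            exact ⟨rfl, hy⟩
      have hsub : A ⊆ V (finProdFinEquiv.symm u).1 :=
        fun a ha => (hVmem _ a).mpr (hdec a ha).1
      have hAFj : A ∈ Fj (finProdFinEquiv.symm u).1 := (hFjmem _ A).mpr ⟨hA, hsub⟩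
      exact hYavoid _ (finProdFinEquiv.symm u).2 A hAFj (fun a ha => (hdec a ha).2)
    have hlXbound : lX.length ≤ ∑ j : Fin r, (D j).card := by
      have hnd : lX.Nodup := (List.isChain_iff_pairwise.mp hlX.1).imp (fun h => ne_of_lt h)
      have hsub : lX.toFinset ⊆ Finset.univ.biUnion D := by
        intro a ha
        rw [List.mem_toFinset] at ha
        obtain ⟨j, hj⟩ := Option.ne_none_iff_exists'.mp (hlX.2.1 a ha)
        exact Finset.mem_biUnion.mpr ⟨j, Finset.mem_univ j, (hDmem j a).mpr hj⟩
      calc lX.length = lX.toFinset.card := (List.toFinset_card_of_nodup hnd).symm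
        _ ≤ (Finset.univ.biUnion D).card := Finset.card_le_card hsub
        _ ≤ ∑ j : Fin r, (D j).card := Finset.card_biUnion_le
    have haltnum_le : (altNum n r H : ℚ) ≤ (lX.length : ℚ) := by
      have hh : altNum n r H ≤ lX.length := by rw [hlXlen, hXalt]; exact hL
      exact_mod_cast hh
    have hcast : (lX.length:ℚ) ≤ ∑ j : Fin r, ((D j).card : ℚ) := by
      have := (Nat.cast_le (α := ℚ)).mpr hlXbound
      push_cast at this
      exact this
    have hsumQ : (∑ j : Fin r, ((D j).card : ℚ)) ≤
        (r:ℚ) * ((s:ℚ)-1) * (t:ℚ) + ∑ j : Fin r, ((l2 j).length : ℚ) := by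
      calc ∑ j : Fin r, ((D j).card:ℚ)
          ≤ ∑ j : Fin r, (((s:ℚ)-1)*(t:ℚ) + ((l2 j).length:ℚ)) :=
            Finset.sum_le_sum (fun j _ => hlen j)
        _ = (r:ℚ) * ((s:ℚ)-1) * (t:ℚ) + ∑ j : Fin r, ((l2 j).length : ℚ) := by
            rw [Finset.sum_add_distrib, Finset.sum_const, Finset.card_univ, Fintype.card_fin,
              nsmul_eq_mul]
            ring
    by_cases hSe : S.card = 0
    · have hz : (∑ j : Fin r, ((l2 j).length:ℚ)) = 0 := by
        have hzz : ∑ j : Fin r, (l2 j).length = 0 := by rw [← hScard]; exact hSe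
        exact_mod_cast hzz
      linarith
    · have hSne : lZ ≠ [] := by
        intro h0
        apply hSe
        rw [← hlZlen, h0]
        rfl
      obtain ⟨a0, ha0⟩ := List.exists_mem_of_ne_nil lZ hSne
      have hZne : ∃ a, Z a ≠ none := ⟨σ a0, hZalt.2.1 a0 ha0⟩
      have hfinal : (∑ j : Fin r, ((l2 j).length:ℚ)) ≤ (altHyp n (r*s) σ F : ℚ) := by
        have h1 : lZ.length ≤ altVec n σ Z := le_altVec hZalt
        have h2 : altVec n σ Z ≤ altHyp n (r*s) σ F := altVec_le_altHyp hZne hZavoid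
        have h3 : (∑ j : Fin r, (l2 j).length) ≤ altHyp n (r*s) σ F := by
          rw [← hScard, ← hlZlen]
          omega
        have := (Nat.cast_le (α := ℚ)).mpr h3
        push_cast at this
        exact this
      linarith
  rw [← hσ]
  have : (0:ℚ) ≤ (altHyp n (r*s) σ F : ℚ) := by positivity
  nlinarith [step1, key]
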